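/- arXiv:2402.04917 — 3 statements merged into one kernel-verified Lean document; each statement's English description precedes it below -/
import Mathlib

section
/- Let η > 0 and σ ∈ S_η. Let h > x > 0 and h' > x' > 0 satisfy x' < x and h' − x' < h − x. Let L : (0,∞) → (0,∞) with L(T) → ∞ as T → ∞, and let t : (0,∞) → [0,∞) satisfy t(T)/min(L(T)³, T) → 0 as T → ∞. Then there exists T₀ > 0 such that for all T ≥ T₀ and all s ∈ [0, t(T)]: γ^{sup,h,x}_T(s) ≤ γ^{sup,h',x'}_T(s) ≤ olγ^{sup,h',x'}_T(s) ≤ olγ^{sup,h,x}_T(s). -/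
open MeasureTheory Filter Set

/-- The natural speed `v(s) = ∫₀^s σ(u) du`. -/
noncomputable def vInt (σ : ℝ → ℝ) (s : ℝ) : ℝ := ∫ u in (0:ℝ)..s, σ u

/-- The super-critical lower barrier
`γ^{sup,h,x}_T(t) = v(t/T)·T + h·L·∫₀^{t/T} (σ')⁻(u) du − x·σ(0)·L`. -/
noncomputable def gammaSup (σ : ℝ → ℝ) (T L h x t : ℝ) : ℝ :=
  vInt σ (t / T) * T + h * L * (∫ u in (0:ℝ)..(t / T), max (-(deriv σ u)) 0)
    - x * σ 0 * L

/-- The super-critical upper barrier `olγ^{sup,h,x}_T(t) = γ^{sup,h,x}_T(t) + h·σ(t/T)·L`. -/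
noncomputable def olGammaSup (σ : ℝ → ℝ) (T L h x t : ℝ) : ℝ :=
  gammaSup σ T L h x t + h * σ (t / T) * L

theorem stmt_2 (η : ℝ) (hη : 0 < η) (σ : ℝ → ℝ)
    (hσC2 : ContDiff ℝ 2 σ)
    (hσ_lb : ∀ u ∈ Icc (0:ℝ) 1, η ≤ σ u)
    (hσ_ub : ∀ u ∈ Icc (0:ℝ) 1, σ u ≤ η⁻¹)
    (hσ'_bd : ∀ u ∈ Icc (0:ℝ) 1, |deriv σ u| ≤ η⁻¹)
    (hσ''_bd : ∀ u ∈ Icc (0:ℝ) 1, |deriv (deriv σ) u| ≤ η⁻¹)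
    (h x h' x' : ℝ) (hx_pos : 0 < x) (hxh : x < h) (hx'_pos : 0 < x') (hx'h' : x' < h')
    (hxx' : x' < x) (hgap : h' - x' < h - x)
    (L : ℝ → ℝ) (hLpos : ∀ T > 0, 0 < L T) (hL : Tendsto L atTop atTop)
    (t : ℝ → ℝ) (ht_nonneg : ∀ T > 0, 0 ≤ t T)
    (ht_small : Tendsto (fun T => t T / min ((L T) ^ 3) T) atTop (nhds 0)) :
    ∃ T₀ > 0, ∀ T ≥ T₀, ∀ s ∈ Icc 0 (t T),
      gammaSup σ T (L T) h x s ≤ gammaSup σ T (L T) h' x' s ∧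
      gammaSup σ T (L T) h' x' s ≤ olGammaSup σ T (L T) h' x' s ∧
      olGammaSup σ T (L T) h' x' s ≤ olGammaSup σ T (L T) h x s := by
  have haa : 0 < h - h' := by linarith
  obtain ⟨a, ha_def⟩ : ∃ a : ℝ, a = h - h' := ⟨_, rfl⟩
  obtain ⟨b, hb_def⟩ : ∃ b : ℝ, b = x - x' := ⟨_, rfl⟩
  have ha : 0 < a := by rw [ha_def]; linarith
  have hb : 0 < b := by rw [hb_def]; linarith
  have hab : b < a := by rw [ha_def, hb_def]; linarith
  obtain ⟨ε, hε_def⟩ : ∃ ε : ℝ, ε = min 1 (min (η^2 * b / a) (η^2 * (a - b) / a)) := ⟨_, rfl⟩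
  have hε : 0 < ε := by
    rw [hε_def]
    refine lt_min one_pos (lt_min (div_pos (mul_pos (pow_pos hη 2) hb) ha)
      (div_pos (mul_pos (pow_pos hη 2) (by linarith)) ha))
  have hE1 : ∀ᶠ T in atTop, 1 ≤ L T := hL.eventually_ge_atTop 1
  have hE2 : ∀ᶠ T in atTop, t T / min ((L T)^3) T < ε :=
    ht_small.eventually (gt_mem_nhds hε)
  have hE3 : ∀ᶠ T in atTop, (1:ℝ) ≤ T := eventually_ge_atTop 1
  obtain ⟨M, hM⟩ := (hE1.and (hE2.and hE3)).exists_forall_of_atTop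
  refine ⟨max M 1, lt_of_lt_of_le one_pos (le_max_right _ _), fun T hT s hs => ?_⟩
  obtain ⟨hL1, hsm, hT1⟩ := hM T (le_trans (le_max_left _ _) hT)
  have hT0 : (0:ℝ) < T := lt_of_lt_of_le one_pos hT1
  have hLp : 0 < L T := hLpos T hT0
  have htn : 0 ≤ t T := ht_nonneg T hT0
  have hmin1 : (1:ℝ) ≤ min ((L T)^3) T := le_min (one_le_pow₀ hL1) hT1
  have hmin0 : (0:ℝ) < min ((L T)^3) T := lt_of_lt_of_le one_pos hmin1
  obtain ⟨u, hu_def⟩ : ∃ u : ℝ, u = s / T := ⟨_, rfl⟩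
  have hu0 : 0 ≤ u := hu_def ▸ div_nonneg hs.1 hT0.le
  have huε : u < ε := by
    have h1 : s / T ≤ t T / T := div_le_div_of_nonneg_right hs.2 hT0.le
    have h2 : t T / T ≤ t T / min ((L T)^3) T :=
      div_le_div_of_nonneg_left htn hmin0 (min_le_right _ _)
    rw [hu_def]; linarith
  have hu1 : u ≤ 1 := le_trans huε.le (by rw [hε_def]; exact min_le_left _ _)
  have hub : a * u ≤ η^2 * b := by
    have h1 : u ≤ η^2 * b / a := le_trans huε.le
      (by rw [hε_def]; exact le_trans (min_le_right _ _) (min_le_left _ _))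
    calc a * u ≤ a * (η^2 * b / a) := by nlinarith
    _ = η^2 * b := by field_simp
  have hub2 : a * u ≤ η^2 * (a - b) := by
    have h1 : u ≤ η^2 * (a - b) / a := le_trans huε.le
      (by rw [hε_def]; exact le_trans (min_le_right _ _) (min_le_right _ _))
    calc a * u ≤ a * (η^2 * (a - b) / a) := by nlinarith
    _ = η^2 * (a - b) := by field_simp
  -- derivative facts
  have hcd : Continuous (deriv σ) := hσC2.continuous_deriv (by norm_num)
  have hcont : Continuous (fun v => max (-(deriv σ v)) 0) := (hcd.neg).max continuous_const
  obtain ⟨I, hI_def⟩ : ∃ I : ℝ, I = ∫ v in (0:ℝ)..u, max (-(deriv σ v)) 0 := ⟨_, rfl⟩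
  have hI0 : 0 ≤ I := hI_def ▸ intervalIntegral.integral_nonneg hu0 (fun v _ => le_max_right _ _)
  have hIub : I ≤ u * η⁻¹ := by
    have hmono : (∫ v in (0:ℝ)..u, max (-(deriv σ v)) 0) ≤ ∫ _v in (0:ℝ)..u, η⁻¹ := by
      apply intervalIntegral.integral_mono_on hu0 (hcont.intervalIntegrable _ _)
        intervalIntegrable_const
      intro v hv
      refine max_le ?_ (inv_nonneg.mpr hη.le)
      have h2 := abs_le.mp (hσ'_bd v ⟨hv.1, hv.2.trans hu1⟩)
      linarith [h2.1]
    rw [hI_def]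
    simpa [intervalIntegral.integral_const, smul_eq_mul, mul_comm] using hmono
  have hσ0 : η ≤ σ 0 := hσ_lb 0 ⟨le_rfl, zero_le_one⟩
  have hσu : η ≤ σ u := hσ_lb u ⟨hu0, hu1⟩
  have hlip : |σ u - σ 0| ≤ η⁻¹ * u := by
    have hd : ∀ v ∈ Icc (0:ℝ) 1, DifferentiableAt ℝ σ v := fun v _ =>
      (hσC2.differentiable (by norm_num)) v
    have hbd : ∀ v ∈ Icc (0:ℝ) 1, ‖deriv σ v‖ ≤ η⁻¹ := fun v hv => by
      rw [Real.norm_eq_abs]; exact hσ'_bd v hv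
    have := (convex_Icc (0:ℝ) 1).norm_image_sub_le_of_norm_deriv_le hd hbd
      ⟨le_rfl, zero_le_one⟩ ⟨hu0, hu1⟩
    simpa [Real.norm_eq_abs, abs_of_nonneg hu0] using this
  have hlip' : σ 0 - η⁻¹ * u ≤ σ u := by
    have := (abs_le.mp hlip).1
    linarith
  -- key scalar inequalities
  have key1 : a * I ≤ b * σ 0 := by
    have s1 : a * I ≤ a * (u * η⁻¹) := mul_le_mul_of_nonneg_left hIub ha.le
    have s2 : a * u * η⁻¹ ≤ η^2 * b * η⁻¹ := mul_le_mul_of_nonneg_right hub (inv_nonneg.mpr hη.le)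
    have s3 : η^2 * b * η⁻¹ = η * b := by field_simp
    have s4 : η * b ≤ σ 0 * b := mul_le_mul_of_nonneg_right hσ0 hb.le
    linarith
  have key3 : b * σ 0 ≤ a * I + a * σ u := by
    have s1 : a * (σ 0 - η⁻¹ * u) ≤ a * σ u := mul_le_mul_of_nonneg_left hlip' ha.le
    have s2 : a * u * η⁻¹ ≤ η^2 * (a - b) * η⁻¹ :=
      mul_le_mul_of_nonneg_right hub2 (inv_nonneg.mpr hη.le)
    have s3 : η^2 * (a - b) * η⁻¹ = η * (a - b) := by field_simp
    have s4 : η * (a - b) ≤ σ 0 * (a - b) := mul_le_mul_of_nonneg_right hσ0 (by linarith)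
    have hIa : 0 ≤ a * I := mul_nonneg ha.le hI0
    nlinarith
  refine ⟨?_, ?_, ?_⟩
  · simp only [gammaSup]
    rw [← hu_def, ← hI_def]
    have hk := mul_le_mul_of_nonneg_right key1 hLp.le
    rw [ha_def, hb_def] at hk
    linarith
  · simp only [olGammaSup]
    rw [← hu_def]
    have := mul_pos (mul_pos (lt_trans hx'_pos hx'h') (lt_of_lt_of_le hη hσu)) hLp
    linarith
  · simp only [olGammaSup, gammaSup]
    rw [← hu_def, ← hI_def]
    have hk := mul_le_mul_of_nonneg_right key3 hLp.le
    rw [ha_def, hb_def] at hk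
    linarith [hk]
end

section
/- Let η > 0 and σ ∈ S_η. Let h > x > 0 and h' > x' > 0 satisfy x' < x and h' − x' < h − x. Let L : (0,∞) → (0,∞) with L(T) → ∞ as T → ∞, and let t : (0,∞) → [0,∞) satisfy t(T)/min(L(T)³, T) → 0 as T → ∞. Then there exists T₀ > 0 such that for all T ≥ T₀ and all s ∈ [0, t(T)]: γ^{sub,h,x}_T(s) ≤ γ^{sub,h',x'}_T(s) ≤ olγ^{sub,h',x'}_T(s) ≤ olγ^{sub,h,x}_T(s). -/
open MeasureTheory Filter Set

/-- The sub-critical lower barrier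
`γ^{sub,h,x}_T(t) = v(t/T)·T·√(1 − π²/(h²·L²)) − x·σ(0)·L`. -/
noncomputable def gammaSub (σ : ℝ → ℝ) (T L h x t : ℝ) : ℝ :=
  vInt σ (t / T) * T * Real.sqrt (1 - Real.pi ^ 2 / (h ^ 2 * L ^ 2)) - x * σ 0 * L

/-- The sub-critical upper barrier `olγ^{sub,h,x}_T(t) = γ^{sub,h,x}_T(t) + h·σ(t/T)·L`. -/
noncomputable def olGammaSub (σ : ℝ → ℝ) (T L h x t : ℝ) : ℝ :=
  gammaSub σ T L h x t + h * σ (t / T) * L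


lemma vInt_nonneg (σ : ℝ → ℝ) (hσ : ∀ u ∈ Icc (0:ℝ) 1, (0:ℝ) ≤ σ u) (u : ℝ)
    (hu : u ∈ Icc (0:ℝ) 1) : 0 ≤ vInt σ u := by
  apply intervalIntegral.integral_nonneg hu.1
  intro v hv
  exact hσ v ⟨hv.1, hv.2.trans hu.2⟩

lemma vInt_le (σ : ℝ → ℝ) (hc : Continuous σ) (C : ℝ) (hσ : ∀ u ∈ Icc (0:ℝ) 1, σ u ≤ C)
    (u : ℝ) (hu : u ∈ Icc (0:ℝ) 1) : vInt σ u ≤ C * u := by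
  have := intervalIntegral.integral_mono_on hu.1 (hc.intervalIntegrable 0 u)
    (intervalIntegrable_const
      (c := C) (μ := MeasureTheory.volume) (a := (0:ℝ)) (b := u))
    (fun v hv => hσ v ⟨hv.1, hv.2.trans hu.2⟩)
  simpa [vInt, mul_comm] using this

lemma lip_aux (σ : ℝ → ℝ) (hσ : ContDiff ℝ 2 σ) (C : ℝ)
    (hbd : ∀ u ∈ Icc (0:ℝ) 1, |deriv σ u| ≤ C) (u : ℝ) (hu : u ∈ Icc (0:ℝ) 1) :
    |σ u - σ 0| ≤ C * u := by
  have hdiff : Differentiable ℝ σ := hσ.differentiable (by norm_num)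
  have h0 : (0:ℝ) ∈ Icc (0:ℝ) 1 := ⟨le_refl 0, zero_le_one⟩
  have := (convex_Icc (0:ℝ) 1).norm_image_sub_le_of_norm_deriv_le
    (f := σ) (C := C) (fun v _ => hdiff v)
    (fun v hv => by simpa [Real.norm_eq_abs] using hbd v hv) h0 hu
  simpa [Real.norm_eq_abs, abs_of_nonneg hu.1] using this

lemma sqrt_diff_le (a b : ℝ) (hb : 1/2 ≤ b) (hba : b ≤ a) :
    Real.sqrt a - Real.sqrt b ≤ a - b := by
  have hb0 : (0:ℝ) ≤ b := by linarith
  have ha0 : (0:ℝ) ≤ a := by linarith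
  have hsa : Real.sqrt a ^ 2 = a := Real.sq_sqrt ha0
  have hsb : Real.sqrt b ^ 2 = b := Real.sq_sqrt hb0
  have hq : Real.sqrt (1/4) = 1/2 := by
    rw [show (1/4:ℝ) = (1/2)^2 by norm_num, Real.sqrt_sq (by norm_num)]
  have h1 : (1:ℝ) ≤ Real.sqrt b + Real.sqrt b := by
    have : Real.sqrt (1/4) ≤ Real.sqrt b := Real.sqrt_le_sqrt (by linarith)
    rw [hq] at this; linarith
  have hmono : Real.sqrt b ≤ Real.sqrt a := Real.sqrt_le_sqrt hba
  nlinarith [Real.sqrt_nonneg a, Real.sqrt_nonneg b]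

set_option maxHeartbeats 1000000 in
theorem stmt_3 (η : ℝ) (hη : 0 < η) (σ : ℝ → ℝ)
    (hσC2 : ContDiff ℝ 2 σ)
    (hσ_lb : ∀ u ∈ Icc (0:ℝ) 1, η ≤ σ u)
    (hσ_ub : ∀ u ∈ Icc (0:ℝ) 1, σ u ≤ η⁻¹)
    (hσ'_bd : ∀ u ∈ Icc (0:ℝ) 1, |deriv σ u| ≤ η⁻¹)
    (hσ''_bd : ∀ u ∈ Icc (0:ℝ) 1, |deriv (deriv σ) u| ≤ η⁻¹)
    (h x h' x' : ℝ) (hx_pos : 0 < x) (hxh : x < h) (hx'_pos : 0 < x') (hx'h' : x' < h')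
    (hxx' : x' < x) (hgap : h' - x' < h - x)
    (L : ℝ → ℝ) (hLpos : ∀ T > 0, 0 < L T) (hL : Tendsto L atTop atTop)
    (t : ℝ → ℝ) (ht_nonneg : ∀ T > 0, 0 ≤ t T)
    (ht_small : Tendsto (fun T => t T / min ((L T) ^ 3) T) atTop (nhds 0)) :
    ∃ T₀ > 0, ∀ T ≥ T₀, ∀ s ∈ Icc 0 (t T),
      gammaSub σ T (L T) h x s ≤ gammaSub σ T (L T) h' x' s ∧
      gammaSub σ T (L T) h' x' s ≤ olGammaSub σ T (L T) h' x' s ∧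
      olGammaSub σ T (L T) h' x' s ≤ olGammaSub σ T (L T) h x s := by
  have hh' : 0 < h' := hx'_pos.trans hx'h'
  have hhh' : h' < h := by linarith
  have hηi : 0 < η⁻¹ := inv_pos.mpr hη
  have hπ : 0 < Real.pi := Real.pi_pos
  set K : ℝ := Real.pi ^ 2 / h' ^ 2 with hKdef
  have hKpos : 0 < K := by positivity
  set ε₁ : ℝ := (x - x') * η ^ 2 / K with hε₁def
  set ε₂ : ℝ := ((h - h') - (x - x')) * η ^ 2 / (h - h') with hε₂def
  have hε₁pos : 0 < ε₁ :=
    div_pos (mul_pos (by linarith) (by positivity)) hKpos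
  have hε₂pos : 0 < ε₂ :=
    div_pos (mul_pos (by linarith) (by positivity)) (by linarith)
  set ε : ℝ := min 1 (min ε₁ ε₂) with hεdef
  have hεpos : 0 < ε := lt_min one_pos (lt_min hε₁pos hε₂pos)
  have hε1 : ε ≤ 1 := min_le_left _ _
  have hεε₁ : ε ≤ ε₁ := (min_le_right _ _).trans (min_le_left _ _)
  have hεε₂ : ε ≤ ε₂ := (min_le_right _ _).trans (min_le_right _ _)
  have hev : ∀ᶠ T in atTop, (1:ℝ) ≤ T ∧ 2 * Real.pi / h' ≤ L T ∧
      t T / min ((L T) ^ 3) T < ε := by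
    filter_upwards [eventually_ge_atTop (1:ℝ), hL.eventually_ge_atTop (2 * Real.pi / h'),
      (tendsto_order.1 ht_small).2 ε hεpos] with T h1 h2 h3
    exact ⟨h1, h2, h3⟩
  obtain ⟨T₀, hT₀⟩ := eventually_atTop.mp hev
  refine ⟨max T₀ 1, lt_of_lt_of_le one_pos (le_max_right _ _), fun T hT s hs => ?_⟩
  obtain ⟨hT1, hLlb, hsm⟩ := hT₀ T ((le_max_left _ _).trans hT)
  have hTpos : (0:ℝ) < T := by linarith
  have hLT : 0 < L T := hLpos T hTpos
  have hminpos : 0 < min ((L T) ^ 3) T := lt_min (by positivity) hTpos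
  have htT : t T < ε * min ((L T) ^ 3) T := (div_lt_iff₀ hminpos).mp hsm
  have htL3 : t T ≤ ε * (L T) ^ 3 :=
    htT.le.trans (mul_le_mul_of_nonneg_left (min_le_left _ _) hεpos.le)
  have htTT : t T ≤ ε * T :=
    htT.le.trans (mul_le_mul_of_nonneg_left (min_le_right _ _) hεpos.le)
  obtain ⟨hs0, hst⟩ := hs
  have hsT : s ≤ T := by nlinarith
  have hu : s / T ∈ Icc (0:ℝ) 1 :=
    ⟨div_nonneg hs0 hTpos.le, (div_le_one hTpos).mpr hsT⟩
  -- bounds on v := vInt σ (s/T)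
  set v : ℝ := vInt σ (s / T) with hvdef
  have hv0 : 0 ≤ v :=
    vInt_nonneg σ (fun u hu' => (hη.le.trans (hσ_lb u hu'))) _ hu
  have hv1 : v ≤ η⁻¹ * (s / T) := vInt_le σ hσC2.continuous η⁻¹ hσ_ub _ hu
  have hvT : v * T ≤ η⁻¹ * s := by
    have := mul_le_mul_of_nonneg_right hv1 hTpos.le
    calc v * T ≤ η⁻¹ * (s / T) * T := this
    _ = η⁻¹ * s := by field_simp
  -- sqrt bounds
  set A : ℝ := 1 - Real.pi ^ 2 / (h ^ 2 * (L T) ^ 2) with hAdef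
  set B : ℝ := 1 - Real.pi ^ 2 / (h' ^ 2 * (L T) ^ 2) with hBdef
  have hLlb' : 2 * Real.pi ≤ h' * L T := by
    rw [div_le_iff₀ hh'] at hLlb; linarith [hLlb]
  have hB2 : 1/2 ≤ B := by
    have hq := mul_le_mul hLlb' hLlb' (by positivity) (by positivity)
    have h4 : 4 * Real.pi ^ 2 ≤ h' ^ 2 * (L T) ^ 2 := by linarith [hq]
    have : Real.pi ^ 2 / (h' ^ 2 * (L T) ^ 2) ≤ 1/4 := by
      rw [div_le_iff₀ (by positivity)]; linarith
    simp only [hBdef]; linarith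
  have hBA : B ≤ A := by
    have : Real.pi ^ 2 / (h ^ 2 * (L T) ^ 2) ≤ Real.pi ^ 2 / (h' ^ 2 * (L T) ^ 2) := by
      apply div_le_div_of_nonneg_left (by positivity) (by positivity)
      have : h' * h' ≤ h * h := mul_le_mul hhh'.le hhh'.le hh'.le (by linarith)
      nlinarith [sq_nonneg (L T)]
    simp only [hAdef, hBdef]; linarith
  have hsd0 : 0 ≤ Real.sqrt A - Real.sqrt B := by
    have := Real.sqrt_le_sqrt hBA; linarith
  have hABK : A - B ≤ K / (L T) ^ 2 := by
    have h1 : A - B = Real.pi ^ 2 / (h' ^ 2 * (L T) ^ 2)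
        - Real.pi ^ 2 / (h ^ 2 * (L T) ^ 2) := by simp only [hAdef, hBdef]; ring
    have h2 : Real.pi ^ 2 / (h' ^ 2 * (L T) ^ 2) = K / (L T) ^ 2 := by
      rw [hKdef]; field_simp
    have h3 : 0 ≤ Real.pi ^ 2 / (h ^ 2 * (L T) ^ 2) := by positivity
    linarith
  have hsd : Real.sqrt A - Real.sqrt B ≤ K / (L T) ^ 2 :=
    (sqrt_diff_le A B hB2 hBA).trans hABK
  -- key inequality 1: v*T*(√A - √B) ≤ (x - x')*σ 0*(L T)
  have hσ0 : η ≤ σ 0 := hσ_lb 0 ⟨le_refl 0, zero_le_one⟩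
  have hvT0 : 0 ≤ v * T := mul_nonneg hv0 hTpos.le
  have key1 : v * T * (Real.sqrt A - Real.sqrt B) ≤ (x - x') * σ 0 * L T := by
    have hts0 : 0 ≤ t T := ht_nonneg T hTpos
    have c1 : v * T * (Real.sqrt A - Real.sqrt B) ≤ (η⁻¹ * t T) * (K / (L T) ^ 2) := by
      exact mul_le_mul (hvT.trans (mul_le_mul_of_nonneg_left hst hηi.le)) hsd hsd0
        (mul_nonneg hηi.le hts0)
    have c2 : (η⁻¹ * t T) * (K / (L T) ^ 2) ≤ (η⁻¹ * (ε * (L T) ^ 3)) * (K / (L T) ^ 2) := by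
      apply mul_le_mul_of_nonneg_right _ (by positivity)
      exact mul_le_mul_of_nonneg_left htL3 hηi.le
    have c3 : (η⁻¹ * (ε * (L T) ^ 3)) * (K / (L T) ^ 2) = η⁻¹ * ε * K * L T := by
      field_simp
    have c4 : η⁻¹ * ε * K * L T ≤ η⁻¹ * ε₁ * K * L T := by
      apply mul_le_mul_of_nonneg_right _ hLT.le
      apply mul_le_mul_of_nonneg_right _ hKpos.le
      exact mul_le_mul_of_nonneg_left hεε₁ hηi.le
    have hηne : η ≠ 0 := hη.ne'
    have hKne : K ≠ 0 := hKpos.ne'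
    have c5 : η⁻¹ * ε₁ * K * L T = (x - x') * η * L T := by
      rw [hε₁def]; field_simp
    have c6 : (x - x') * η * L T ≤ (x - x') * σ 0 * L T :=
      mul_le_mul_of_nonneg_right
        (mul_le_mul_of_nonneg_left hσ0 (by linarith)) hLT.le
    linarith
  -- key inequality 3: (x-x')*σ 0 ≤ (h-h')*σ (s/T)
  have huε : s / T ≤ ε := by
    rw [div_le_iff₀ hTpos]; nlinarith
  have hlip : |σ (s / T) - σ 0| ≤ η⁻¹ * (s / T) := lip_aux σ hσC2 η⁻¹ hσ'_bd _ hu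
  have hσu_lb : σ 0 - η⁻¹ * ε ≤ σ (s / T) := by
    have h1 : σ 0 - σ (s / T) ≤ η⁻¹ * (s / T) := by
      have := abs_le.1 hlip; linarith [this.1]
    have h2 : η⁻¹ * (s / T) ≤ η⁻¹ * ε := mul_le_mul_of_nonneg_left huε hηi.le
    linarith
  have key3 : (x - x') * σ 0 ≤ (h - h') * σ (s / T) := by
    have hηne : η ≠ 0 := hη.ne'
    have hhne : h - h' ≠ 0 := by intro hc; rw [sub_eq_zero] at hc; linarith
    have e23 : (h - h') * (η⁻¹ * ε₂) = ((h - h') - (x - x')) * η := by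
      rw [hε₂def]; field_simp
    have e4 : (h - h') * (η⁻¹ * ε) ≤ (h - h') * (η⁻¹ * ε₂) := by
      apply mul_le_mul_of_nonneg_left _ (by linarith : (0:ℝ) ≤ h - h')
      exact mul_le_mul_of_nonneg_left hεε₂ hηi.le
    have e5 : (h - h') * σ (s / T) ≥ (h - h') * (σ 0 - η⁻¹ * ε) :=
      mul_le_mul_of_nonneg_left hσu_lb (by linarith : (0:ℝ) ≤ h - h')
    have e6 : ((h - h') - (x - x')) * η ≤ ((h - h') - (x - x')) * σ 0 :=
      mul_le_mul_of_nonneg_left hσ0 (by linarith)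
    linarith
  have key3' : (x - x') * σ 0 * L T ≤ (h - h') * σ (s / T) * L T :=
    mul_le_mul_of_nonneg_right key3 hLT.le
  have hvTsd : 0 ≤ v * T * (Real.sqrt A - Real.sqrt B) := mul_nonneg hvT0 hsd0
  refine ⟨?_, ?_, ?_⟩
  · simp only [gammaSub, ← hvdef, ← hAdef, ← hBdef]
    linarith [key1]
  · simp only [olGammaSub]
    have hσu := hη.le.trans (hσ_lb _ hu)
    have : 0 ≤ h' * σ (s / T) * L T := mul_nonneg (mul_nonneg hh'.le hσu) hLT.le
    linarith
  · simp only [olGammaSub, gammaSub, ← hvdef, ← hAdef, ← hBdef]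
    linarith [key3', hvTsd]
end

section
/- Let (Ω, P) be a probability space, let M ≥ 2 be an integer, let ρ ≥ 0, and let g_1, …, g_M be real random variables on Ω, each of which is Gaussian with mean 0 and variance ρ² (no independence is assumed). Then E[((max_{1≤i≤M} g_i)₊)²] ≤ 4·ρ²·log M. -/
open MeasureTheory ProbabilityTheory Real Set Filter
open scoped ENNReal


lemma int_sq (b : ℝ) (hb : 0 < b) : Integrable (fun x : ℝ => x^2 * Real.exp (-b * x^2)) := by
  have := integrable_rpow_mul_exp_neg_mul_sq hb (s := 2) (by norm_num)
  have e : ∀ x : ℝ, x ^ (2:ℝ) = x ^ 2 := fun x => by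
    rw [show (2:ℝ) = ((2:ℕ):ℝ) by norm_num, Real.rpow_natCast]
  simpa [e] using this

lemma exp_form (v : ℝ) (hv : 0 < v) (x : ℝ) : Real.exp (-x^2/(2*v)) = Real.exp (-(2*v)⁻¹ * x^2) := by
  congr 1; field_simp

lemma int_phi (v t : ℝ) (hv : 0 < v) :
    IntegrableOn (fun x : ℝ => (x^2 + (v/t)*x - v) * Real.exp (-x^2/(2*v))) (Ioi t) := by
  have hb : 0 < (2*v)⁻¹ := by positivity
  have : Integrable (fun x : ℝ => (x^2 + (v/t)*x - v) * Real.exp (-(2*v)⁻¹ * x^2)) := by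
    have e1 := int_sq _ hb
    have e2 := ((integrable_mul_exp_neg_mul_sq hb).const_mul (v/t))
    have e3 := ((integrable_exp_neg_mul_sq hb).const_mul v)
    have := (e1.add e2).sub e3
    refine this.congr (Filter.Eventually.of_forall
      (fun x => by simp only [Pi.add_apply, Pi.sub_apply]; ring))
  exact (this.congr (Filter.Eventually.of_forall
    (fun x => by rw [exp_form v hv]))).integrableOn

lemma ftc (v t : ℝ) (hv : 0 < v) (ht : 0 < t) :
    ∫ x in Ioi t, (x^2 + (v/t)*x - v) * Real.exp (-x^2/(2*v))
      = (v*t + v^2/t) * Real.exp (-t^2/(2*v)) := by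
  have hb : 0 < (2*v)⁻¹ := by positivity
  have key : ∀ x : ℝ, HasDerivAt (fun x => -(v*x + v^2/t) * Real.exp (-x^2/(2*v)))
      ((x^2 + (v/t)*x - v) * Real.exp (-x^2/(2*v))) x := by
    intro x
    have h1 : HasDerivAt (fun x : ℝ => -(v*x + v^2/t)) (-v) x := by
      have h := (((hasDerivAt_id x).const_mul v).add_const (v^2/t)).neg
      rw [mul_one] at h
      exact h
    have h3 : HasDerivAt (fun x : ℝ => -x^2/(2*v)) (-(2*x)/(2*v)) x := by
      simpa [neg_div] using (((hasDerivAt_pow 2 x)).neg.div_const (2*v))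
    have h2 : HasDerivAt (fun x : ℝ => Real.exp (-x^2/(2*v)))
        (Real.exp (-x^2/(2*v)) * (-(2*x)/(2*v))) x := h3.exp
    refine (h1.mul h2).congr_deriv ?_
    field_simp
    ring
  have hint := int_phi v t hv
  have htend : Tendsto (fun x : ℝ => -(v*x + v^2/t) * Real.exp (-x^2/(2*v))) atTop (nhds 0) := by
    have h1 : (fun x : ℝ => -(v*x + v^2/t) * Real.exp (-(2*v)⁻¹ * x^2)) =O[atTop]
        (fun x : ℝ => Real.exp (-(1/2) * x)) := by
      have a1 := (rpow_mul_exp_neg_mul_sq_isLittleO_exp_neg hb 1).isBigO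
      have a0 := (rpow_mul_exp_neg_mul_sq_isLittleO_exp_neg hb 0).isBigO
      have e1 : ∀ᶠ x : ℝ in atTop, x ^ (1:ℝ) = x := by
        filter_upwards [eventually_ge_atTop 0] with x hx using Real.rpow_one x
      have e0 : ∀ᶠ x : ℝ in atTop, x ^ (0:ℝ) = 1 := by
        filter_upwards [eventually_gt_atTop 0] with x hx using Real.rpow_zero x
      have b1 : (fun x : ℝ => x * Real.exp (-(2*v)⁻¹ * x^2)) =O[atTop] (fun x => Real.exp (-(1/2) * x)) := by
        refine Asymptotics.IsBigO.congr' a1 ?_ (Eventually.of_forall fun _ => rfl)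
        filter_upwards [e1] with x hx; rw [hx]
      have b0 : (fun x : ℝ => Real.exp (-(2*v)⁻¹ * x^2)) =O[atTop] (fun x => Real.exp (-(1/2) * x)) := by
        refine Asymptotics.IsBigO.congr' a0 ?_ (Eventually.of_forall fun _ => rfl)
        filter_upwards [e0] with x hx; rw [hx, one_mul]
      have : (fun x : ℝ => -(v*x + v^2/t) * Real.exp (-(2*v)⁻¹ * x^2)) =
          (fun x : ℝ => (-v) * (x * Real.exp (-(2*v)⁻¹ * x^2)) + (-(v^2/t)) * Real.exp (-(2*v)⁻¹ * x^2)) := by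
        funext x; ring
      rw [this]
      exact ((b1.const_mul_left _).add (b0.const_mul_left _))
    have htz : Tendsto (fun x : ℝ => Real.exp (-(1/2) * x)) atTop (nhds 0) := by
      have : Tendsto (fun x : ℝ => (1/2) * x) atTop atTop :=
        Tendsto.const_mul_atTop (by norm_num) tendsto_id
      have := Real.tendsto_exp_neg_atTop_nhds_zero.comp this
      refine this.congr (fun x => ?_)
      simp [Function.comp, neg_mul]
    have := h1.trans_tendsto htz
    refine this.congr (fun x => by rw [exp_form v hv])
  rw [show (v*t + v^2/t) * Real.exp (-t^2/(2*v)) = 0 - (-(v*t + v^2/t) * Real.exp (-t^2/(2*v))) by ring]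
  exact integral_Ioi_of_hasDerivAt_of_tendsto' (fun x _ => key x) hint htend


lemma int_sq_on (v t : ℝ) (hv : 0 < v) :
    IntegrableOn (fun x : ℝ => x^2 * Real.exp (-x^2/(2*v))) (Ioi t) := by
  have hb : 0 < (2*v)⁻¹ := by positivity
  exact ((int_sq _ hb).congr (Eventually.of_forall fun x => by
    rw [exp_form v hv])).integrableOn

lemma pdf_eq (v : ℝ) (hv : 0 < v) (x : ℝ) :
    gaussianPDFReal 0 v.toNNReal x = (Real.sqrt (2*π*v))⁻¹ * Real.exp (-x^2/(2*v)) := by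
  rw [gaussianPDFReal]
  rw [Real.coe_toNNReal _ hv.le]
  norm_num

lemma tail_bound (v t : ℝ) (hv : 0 < v) (ht : 0 < t) :
    ∫ x in Ioi t, x^2 * gaussianPDFReal 0 v.toNNReal x
      ≤ (Real.sqrt (2*π*v))⁻¹ * ((v*t + v^2/t) * Real.exp (-t^2/(2*v))) := by
  have hc : (0:ℝ) ≤ (Real.sqrt (2*π*v))⁻¹ := by positivity
  calc ∫ x in Ioi t, x^2 * gaussianPDFReal 0 v.toNNReal x
      = (Real.sqrt (2*π*v))⁻¹ * ∫ x in Ioi t, x^2 * Real.exp (-x^2/(2*v)) := by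
        rw [← integral_const_mul]
        refine setIntegral_congr_fun measurableSet_Ioi (fun x _ => ?_)
        rw [pdf_eq v hv]; ring
    _ ≤ (Real.sqrt (2*π*v))⁻¹ * ∫ x in Ioi t, (x^2 + (v/t)*x - v) * Real.exp (-x^2/(2*v)) := by
        refine mul_le_mul_of_nonneg_left ?_ hc
        refine setIntegral_mono_on (int_sq_on v t hv) (int_phi v t hv) measurableSet_Ioi
          (fun x hx => ?_)
        have hx' : t ≤ x := (le_of_lt hx)
        have : v ≤ (v/t)*x := by
          rw [div_mul_eq_mul_div, le_div_iff₀ ht]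
          nlinarith
        nlinarith [Real.exp_pos (-x^2/(2*v)), sq_nonneg x]
    _ = (Real.sqrt (2*π*v))⁻¹ * ((v*t + v^2/t) * Real.exp (-t^2/(2*v))) := by
        rw [ftc v t hv ht]


lemma per_i {Ω : Type*} [MeasurableSpace Ω] (P : Measure Ω) [IsProbabilityMeasure P]
    (X : Ω → ℝ) (hm : Measurable X) (v t : ℝ) (hv : 0 < v) (ht : 0 < t)
    (hlaw : Measure.map X P = gaussianReal 0 v.toNNReal) :
    ∫⁻ ω, ENNReal.ofReal (Set.indicator (Ioi t) (fun x => x^2) (X ω)) ∂P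
      ≤ ENNReal.ofReal ((Real.sqrt (2*π*v))⁻¹ * ((v*t + v^2/t) * Real.exp (-t^2/(2*v)))) := by
  have hvne : v.toNNReal ≠ 0 := by
    simp [Real.toNNReal_eq_zero, not_le, hv]
  have hFm : Measurable (fun x : ℝ => ENNReal.ofReal (Set.indicator (Ioi t) (fun x => x^2) x)) := by
    refine ENNReal.measurable_ofReal.comp ?_
    exact Measurable.indicator (measurable_id.pow_const 2) measurableSet_Ioi
  have h1 : ∫⁻ ω, ENNReal.ofReal (Set.indicator (Ioi t) (fun x => x^2) (X ω)) ∂P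
      = ∫⁻ x, ENNReal.ofReal (Set.indicator (Ioi t) (fun x => x^2) x) ∂(gaussianReal 0 v.toNNReal) := by
    rw [← hlaw, lintegral_map hFm hm]
  rw [h1, gaussianReal_of_var_ne_zero 0 hvne,
    lintegral_withDensity_eq_lintegral_mul _ (measurable_gaussianPDF 0 v.toNNReal) hFm]
  have h2 : ∀ x : ℝ, (gaussianPDF 0 v.toNNReal * fun x => ENNReal.ofReal (Set.indicator (Ioi t) (fun x => x^2) x)) x
      = ENNReal.ofReal (Set.indicator (Ioi t) (fun y => y^2 * gaussianPDFReal 0 v.toNNReal y) x) := by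
    intro x
    simp only [Pi.mul_apply, gaussianPDF]
    rw [← ENNReal.ofReal_mul (gaussianPDFReal_nonneg 0 v.toNNReal x)]
    congr 1
    by_cases hx : x ∈ Ioi t
    · simp [hx]; ring
    · simp [hx]
  simp_rw [h2]
  have hint : Integrable (Set.indicator (Ioi t) (fun y => y^2 * gaussianPDFReal 0 v.toNNReal y)) := by
    rw [integrable_indicator_iff measurableSet_Ioi]
    refine ((int_sq_on v t hv).const_mul ((Real.sqrt (2*π*v))⁻¹)).congr ?_
    refine Eventually.of_forall (fun x => ?_)
    simp only []
    rw [pdf_eq v hv]; ring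
  have hnn : 0 ≤ᶠ[ae volume] (Set.indicator (Ioi t) (fun y => y^2 * gaussianPDFReal 0 v.toNNReal y)) := by
    refine Eventually.of_forall (fun x => ?_)
    refine Set.indicator_nonneg (fun y _ => ?_) x
    exact mul_nonneg (sq_nonneg y) (gaussianPDFReal_nonneg 0 v.toNNReal y)
  rw [← ofReal_integral_eq_lintegral_ofReal hint hnn]
  refine ENNReal.ofReal_le_ofReal ?_
  rw [integral_indicator measurableSet_Ioi]
  exact tail_bound v t hv ht


lemma key (v L : ℝ) (hv : 0 < v) (hL : Real.log 2 ≤ L) :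
    (Real.sqrt (2*π*v))⁻¹ * (v * Real.sqrt (2*v*L) + v^2 / Real.sqrt (2*v*L)) ≤ 2*v*L := by
  have hlog2 : (0.6931471803:ℝ) < Real.log 2 := Real.log_two_gt_d9
  have hL0 : 0 < L := by linarith
  have hsplit1 : Real.sqrt (2*v*L) = Real.sqrt (2*v) * Real.sqrt L := by
    rw [Real.sqrt_mul (by positivity)]
  have hsplit2 : Real.sqrt (2*π*v) = Real.sqrt (2*v) * Real.sqrt π := by
    rw [show 2*π*v = (2*v)*π by ring, Real.sqrt_mul (by positivity)]
  set a := Real.sqrt (2*v) with ha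
  set sL := Real.sqrt L with hsL
  set sπ := Real.sqrt π with hsπ
  have ha0 : 0 < a := Real.sqrt_pos.mpr (by positivity)
  have hsL0 : 0 < sL := Real.sqrt_pos.mpr hL0
  have hsπ0 : 0 < sπ := Real.sqrt_pos.mpr Real.pi_pos
  have ha2 : a^2 = 2*v := Real.sq_sqrt (by positivity)
  have hsL2 : sL^2 = L := Real.sq_sqrt hL0.le
  have hsπ2 : sπ^2 = π := Real.sq_sqrt Real.pi_pos.le
  have hsLb : (0.83:ℝ) ≤ sL := by
    rw [hsL, (Real.le_sqrt (by norm_num) hL0.le)]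
    nlinarith
  have hsπb : (1.77:ℝ) ≤ sπ := by
    rw [hsπ, (Real.le_sqrt (by norm_num) Real.pi_pos.le)]
    nlinarith [Real.pi_gt_d6]
  rw [hsplit1, hsplit2]
  rw [inv_mul_le_iff₀ (by positivity)]
  rw [← mul_le_mul_iff_left₀ (show (0:ℝ) < a * sL by positivity)]
  have hd : v^2 / (a*sL) * (a*sL) = v^2 := div_mul_cancel₀ _ (by positivity)
  have hss : (1.46:ℝ) ≤ sL * sπ := by nlinarith
  have h4 : 1.46 * L ≤ sL * sπ * L := mul_le_mul_of_nonneg_right hss hL0.le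
  calc (v * (a * sL) + v^2 / (a*sL)) * (a*sL) = v * (a^2 * sL^2) + v^2 := by
        rw [add_mul, hd]; ring
    _ = 2*v^2*L + v^2 := by rw [ha2, hsL2]; ring
    _ ≤ 4*v^2*L*(sL*sπ) := by nlinarith [sq_nonneg v, mul_pos hv hv]
    _ = 2*v*L*(a*sπ)*(a*sL) := by rw [show 2*v*L*(a*sπ)*(a*sL) = 2*v*L*sL*sπ*a^2 by ring, ha2]; ring
    _ = a*sπ*(2*v*L)*(a*sL) := by ring


theorem stmt_6 {Ω : Type*} [MeasurableSpace Ω] (P : Measure Ω) [IsProbabilityMeasure P]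
    (M : ℕ) (hM : 2 ≤ M) (ρ : ℝ) (hρ : 0 ≤ ρ) (g : Fin M → Ω → ℝ)
    (hmeas : ∀ i, Measurable (g i))
    (hgauss : ∀ i, Measure.map (g i) P = gaussianReal 0 (Real.toNNReal (ρ ^ 2))) :
    ∫⁻ ω, ENNReal.ofReal ((max (⨆ i, g i ω) 0) ^ 2) ∂P
      ≤ ENNReal.ofReal (4 * ρ ^ 2 * Real.log M) := by
  haveI : Nonempty (Fin M) := ⟨⟨0, by omega⟩⟩
  rcases eq_or_lt_of_le hρ with hρ0 | hρpos
  · -- ρ = 0 case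
    have hdirac : ∀ i, Measure.map (g i) P = Measure.dirac 0 := by
      intro i
      rw [hgauss i, ← hρ0]
      norm_num [gaussianReal_zero_var]
    have hae : ∀ᵐ ω ∂P, ∀ i, g i ω = 0 := by
      rw [ae_all_iff]
      intro i
      have : P (g i ⁻¹' ({0}ᶜ)) = 0 := by
        rw [← Measure.map_apply (hmeas i) (measurableSet_singleton (0:ℝ)).compl, hdirac i,
          Measure.dirac_apply' _ (measurableSet_singleton (0:ℝ)).compl]
        simp
      rw [ae_iff]
      convert this using 2
      rfl
    have hzero : ∫⁻ ω, ENNReal.ofReal ((max (⨆ i, g i ω) 0) ^ 2) ∂P = 0 := by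
      rw [← lintegral_zero (μ := P)]
      refine lintegral_congr_ae ?_
      filter_upwards [hae] with ω hω
      simp [hω, ciSup_const]
    rw [hzero]
    exact zero_le
  · -- ρ > 0 case
    set v : ℝ := ρ^2 with hv_def
    have hv : 0 < v := by positivity
    set L : ℝ := Real.log M with hL_def
    have hlog2 : (0:ℝ) < Real.log 2 := Real.log_pos (by norm_num)
    have hL2 : Real.log 2 ≤ L := by
      refine Real.log_le_log (by norm_num) ?_
      exact_mod_cast hM
    have hL0 : 0 < L := lt_of_lt_of_le hlog2 hL2
    set t : ℝ := Real.sqrt (2*v*L) with ht_def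
    have ht : 0 < t := Real.sqrt_pos.mpr (by positivity)
    have ht2 : t^2 = 2*v*L := Real.sq_sqrt (by positivity)
    -- pointwise bound
    have hpt : ∀ ω, (max (⨆ i, g i ω) 0) ^ 2
        ≤ t^2 + ∑ i, Set.indicator (Ioi t) (fun x => x^2) (g i ω) := by
      intro ω
      have hsum_nn : 0 ≤ ∑ i, Set.indicator (Ioi t) (fun x => x^2) (g i ω) :=
        Finset.sum_nonneg fun i _ => Set.indicator_nonneg (fun y _ => sq_nonneg y) _
      rcases le_or_gt (max (⨆ i, g i ω) 0) t with h | h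
      · have h1 : (max (⨆ i, g i ω) 0)^2 ≤ t^2 :=
          pow_le_pow_left₀ (le_max_right _ _) h 2
        linarith
      · obtain ⟨j, hj⟩ := exists_eq_ciSup_of_finite (f := fun i => g i ω)
        have hsup_pos : 0 < ⨆ i, g i ω := by
          by_contra hc
          push_neg at hc
          rw [max_eq_right hc] at h
          linarith
        have hmax : max (⨆ i, g i ω) 0 = g j ω := by
          rw [max_eq_left hsup_pos.le, ← hj]
        have hgj : g j ω ∈ Ioi t := by
          rw [← hmax]; exact h
        have hterm : Set.indicator (Ioi t) (fun x => x^2) (g j ω) = (g j ω)^2 := by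
          rw [Set.indicator_of_mem hgj]
        have hle : (g j ω)^2 ≤ ∑ i, Set.indicator (Ioi t) (fun x => x^2) (g i ω) := by
          rw [← hterm]
          exact Finset.single_le_sum (f := fun i => Set.indicator (Ioi t) (fun x : ℝ => x^2) (g i ω))
            (fun i _ => Set.indicator_nonneg (fun y _ => sq_nonneg y) _) (Finset.mem_univ j)
        rw [hmax]
        nlinarith [sq_nonneg t]
    -- the bound constant
    set C : ℝ := (Real.sqrt (2*π*v))⁻¹ * ((v*t + v^2/t) * Real.exp (-t^2/(2*v))) with hC_def
    have hmeas_ind : ∀ i : Fin M,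
        Measurable (fun ω => ENNReal.ofReal (Set.indicator (Ioi t) (fun x => x^2) (g i ω))) := by
      intro i
      exact ENNReal.measurable_ofReal.comp
        ((Measurable.indicator (measurable_id.pow_const 2) measurableSet_Ioi).comp (hmeas i))
    calc ∫⁻ ω, ENNReal.ofReal ((max (⨆ i, g i ω) 0) ^ 2) ∂P
        ≤ ∫⁻ ω, (ENNReal.ofReal (t^2)
            + ∑ i, ENNReal.ofReal (Set.indicator (Ioi t) (fun x => x^2) (g i ω))) ∂P := by
          refine lintegral_mono (fun ω => ?_)
          calc ENNReal.ofReal ((max (⨆ i, g i ω) 0) ^ 2)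
              ≤ ENNReal.ofReal (t^2 + ∑ i, Set.indicator (Ioi t) (fun x => x^2) (g i ω)) :=
                ENNReal.ofReal_le_ofReal (hpt ω)
            _ = ENNReal.ofReal (t^2)
                + ENNReal.ofReal (∑ i, Set.indicator (Ioi t) (fun x => x^2) (g i ω)) := by
                rw [ENNReal.ofReal_add (sq_nonneg t)]
                exact Finset.sum_nonneg fun i _ =>
                  Set.indicator_nonneg (fun y _ => sq_nonneg y) _
            _ = ENNReal.ofReal (t^2)
                + ∑ i, ENNReal.ofReal (Set.indicator (Ioi t) (fun x => x^2) (g i ω)) := by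
                rw [ENNReal.ofReal_sum_of_nonneg
                  (fun i _ => Set.indicator_nonneg (fun y _ => sq_nonneg y) _)]
      _ = ENNReal.ofReal (t^2)
            + ∑ i, ∫⁻ ω, ENNReal.ofReal (Set.indicator (Ioi t) (fun x => x^2) (g i ω)) ∂P := by
          rw [lintegral_add_left measurable_const, lintegral_const, measure_univ, mul_one,
            lintegral_finset_sum' _ (fun i _ => (hmeas_ind i).aemeasurable)]
      _ ≤ ENNReal.ofReal (t^2) + ∑ _i : Fin M, ENNReal.ofReal C := by
          gcongr with i
          exact per_i P (g i) (hmeas i) v t hv ht (hgauss i)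
      _ = ENNReal.ofReal (t^2) + M * ENNReal.ofReal C := by
          rw [Finset.sum_const, Finset.card_univ, Fintype.card_fin, nsmul_eq_mul]
      _ ≤ ENNReal.ofReal (4 * ρ ^ 2 * Real.log M) := by
          have hMR : (0:ℝ) < M := by positivity
          have hexp : Real.exp (-t^2/(2*v)) = (M:ℝ)⁻¹ := by
            rw [ht2, show -(2*v*L)/(2*v) = -L by field_simp, hL_def,
              Real.exp_neg, Real.exp_log hMR]
          have hMC : (M:ℝ≥0∞) * ENNReal.ofReal C = ENNReal.ofReal ((M:ℝ) * C) := by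
            rw [← ENNReal.ofReal_natCast M, ← ENNReal.ofReal_mul (by positivity : (0:ℝ) ≤ (M:ℝ))]
          rw [hMC, ← ENNReal.ofReal_add (sq_nonneg t) (by positivity)]
          refine ENNReal.ofReal_le_ofReal ?_
          have hMC2 : (M:ℝ) * C = (Real.sqrt (2*π*v))⁻¹ * (v*t + v^2/t) := by
            rw [hC_def, hexp]
            field_simp
          rw [hMC2, ht2]
          have hx := key v L hv hL2
          rw [← ht_def] at hx
          have hrw : 4 * ρ ^ 2 * Real.log (M:ℝ) = 4*v*L := by rw [hv_def, hL_def]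
          rw [hrw]
          linarith
end
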